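/- Let A ∈ ℂ⟦z⟧ be a formal power series that is not rational and has finite Hadamard grade exactly d over ℂ. Then in every decomposition A = B₁ * B₂ * ⋯ * B_d with each Bᵢ ∈ ℂ⟦z⟧ algebraic over ℂ(z), every factor Bᵢ is not rational. -/

import Mathlib

open PowerSeries

/-- The Hadamard product of two formal power series: termwise product of coefficients. -/
noncomputable def hadamardMul {K : Type*} [CommRing K] (A B : PowerSeries K) : PowerSeries K :=
  PowerSeries.mk fun n => coeff n A * coeff n B

/-- A formal power series `A ∈ K⟦z⟧` is algebraic over `K(z)`: there is a nonzero
polynomial `P ∈ K[z][y]` with `P(A) = 0`. -/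
def IsAlgebraicPS {K : Type*} [CommRing K] (A : PowerSeries K) : Prop :=
  ∃ P : Polynomial (Polynomial K), P ≠ 0 ∧
    Polynomial.eval₂ Polynomial.coeToPowerSeries.ringHom A P = 0

/-- `A` has Hadamard grade at most `d` over `K`: it is the Hadamard product of `d`
formal power series, each algebraic over `K(z)`. -/
def HadamardGradeLe {K : Type*} [CommRing K] (A : PowerSeries K) (d : ℕ) : Prop :=
  ∃ B : Fin d → PowerSeries K, (∀ i, IsAlgebraicPS (B i)) ∧
    ∀ n, coeff n A = ∏ i, coeff n (B i)

/-- A formal power series `A ∈ K⟦z⟧` is D-finite: there are polynomials `p₀, …, p_m`,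
not all zero, with `p_m A⁽ᵐ⁾ + ⋯ + p₁ A' + p₀ A = 0`. -/
def IsDFinitePS {K : Type*} [CommRing K] (A : PowerSeries K) : Prop :=
  ∃ (m : ℕ) (p : Fin (m + 1) → Polynomial K), (∃ i, p i ≠ 0) ∧
    ∑ i : Fin (m + 1), ((p i : PowerSeries K) * (⇑(PowerSeries.derivative K))^[i] A) = 0

/-- A formal power series is rational: `Q · A = P` with `Q(0) ≠ 0`. -/
def IsRationalPS {K : Type*} [CommRing K] (A : PowerSeries K) : Prop :=
  ∃ P Q : Polynomial K, Q.coeff 0 ≠ 0 ∧ (Q : PowerSeries K) * A = (P : PowerSeries K)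

noncomputable section JungenAux

abbrev LL := FractionRing (PowerSeries ℂ)
abbrev KK := FractionRing (Polynomial ℂ)

lemma algebraMap_PolyLL_eq :
    algebraMap (Polynomial ℂ) LL
      = (algebraMap (PowerSeries ℂ) LL).comp Polynomial.coeToPowerSeries.ringHom :=
  IsScalarTower.algebraMap_eq _ _ _

lemma injPS : Function.Injective (algebraMap (PowerSeries ℂ) LL) :=
  IsFractionRing.injective _ _

lemma injPoly : Function.Injective (algebraMap (Polynomial ℂ) LL) := by
  rw [algebraMap_PolyLL_eq]
  exact injPS.comp (Polynomial.coe_injective ℂ)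

instance : NoZeroSMulDivisors (Polynomial ℂ) LL :=
  ⟨fun {c x} h => by rw [Algebra.smul_def, mul_eq_zero, map_eq_zero_iff _ injPoly] at h; exact h⟩

noncomputable instance instAlgKKLL : Algebra KK LL := FractionRing.liftAlgebra _ _

lemma isAlgebraicPS_iff {B : PowerSeries ℂ} :
    IsAlgebraicPS B ↔ IsAlgebraic (Polynomial ℂ) (algebraMap (PowerSeries ℂ) LL B) := by
  constructor
  · rintro ⟨P, hP, hPB⟩
    refine ⟨P, hP, ?_⟩
    rw [Polynomial.aeval_def, algebraMap_PolyLL_eq,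
      ← Polynomial.hom_eval₂ P Polynomial.coeToPowerSeries.ringHom
        (algebraMap (PowerSeries ℂ) LL) B, hPB, map_zero]
  · rintro ⟨P, hP, hPB⟩
    refine ⟨P, hP, injPS ?_⟩
    rw [Polynomial.hom_eval₂ P Polynomial.coeToPowerSeries.ringHom
        (algebraMap (PowerSeries ℂ) LL) B, map_zero]
    rw [Polynomial.aeval_def, algebraMap_PolyLL_eq] at hPB
    exact hPB

lemma isAlgebraicPS_iff_integral {B : PowerSeries ℂ} :
    IsAlgebraicPS B ↔ IsIntegral KK (algebraMap (PowerSeries ℂ) LL B) := by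
  rw [isAlgebraicPS_iff, IsFractionRing.isAlgebraic_iff (Polynomial ℂ) KK LL,
    isAlgebraic_iff_isIntegral]

lemma integral_of_poly (p : Polynomial ℂ) :
    IsIntegral KK (algebraMap (PowerSeries ℂ) LL (p : PowerSeries ℂ)) := by
  have h1 : algebraMap (PowerSeries ℂ) LL (p : PowerSeries ℂ)
      = algebraMap (Polynomial ℂ) LL p := by rw [algebraMap_PolyLL_eq]; rfl
  have h2 : algebraMap (Polynomial ℂ) LL p = algebraMap KK LL (algebraMap (Polynomial ℂ) KK p) :=
    (IsScalarTower.algebraMap_apply _ _ _ _)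
  rw [h1, h2]
  exact isIntegral_algebraMap

lemma IsAlgebraicPS.ofPoly (p : Polynomial ℂ) : IsAlgebraicPS (p : PowerSeries ℂ) :=
  isAlgebraicPS_iff_integral.mpr (integral_of_poly p)

lemma IsAlgebraicPS.add {B C : PowerSeries ℂ} (hB : IsAlgebraicPS B) (hC : IsAlgebraicPS C) :
    IsAlgebraicPS (B + C) := by
  rw [isAlgebraicPS_iff_integral] at *
  rw [map_add]; exact hB.add hC

lemma IsAlgebraicPS.mul {B C : PowerSeries ℂ} (hB : IsAlgebraicPS B) (hC : IsAlgebraicPS C) :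
    IsAlgebraicPS (B * C) := by
  rw [isAlgebraicPS_iff_integral] at *
  rw [map_mul]; exact hB.mul hC

lemma IsAlgebraicPS.neg {B : PowerSeries ℂ} (hB : IsAlgebraicPS B) : IsAlgebraicPS (-B) := by
  rw [isAlgebraicPS_iff_integral] at *
  rw [map_neg]; exact hB.neg

lemma IsAlgebraicPS.sub {B C : PowerSeries ℂ} (hB : IsAlgebraicPS B) (hC : IsAlgebraicPS C) :
    IsAlgebraicPS (B - C) := by
  rw [sub_eq_add_neg]; exact hB.add hC.neg

lemma IsAlgebraicPS.const (c : ℂ) : IsAlgebraicPS (PowerSeries.C c) := by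
  rw [← Polynomial.coe_C]; exact IsAlgebraicPS.ofPoly _

lemma IsAlgebraicPS.X : IsAlgebraicPS (PowerSeries.X : PowerSeries ℂ) := by
  rw [← Polynomial.coe_X]; exact IsAlgebraicPS.ofPoly _

lemma IsAlgebraicPS.zero : IsAlgebraicPS (0 : PowerSeries ℂ) := by
  simpa using IsAlgebraicPS.ofPoly 0

/-- quotient closure: if `u * B = v` with `u, v` algebraic and `u ≠ 0` then `B` is algebraic. -/
lemma IsAlgebraicPS.of_mul_eq {u v B : PowerSeries ℂ} (hu : IsAlgebraicPS u)
    (hv : IsAlgebraicPS v) (hune : u ≠ 0) (h : u * B = v) : IsAlgebraicPS B := by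
  rw [isAlgebraicPS_iff_integral] at *
  have hu0 : algebraMap (PowerSeries ℂ) LL u ≠ 0 := fun h0 => hune (injPS (by rwa [map_zero]))
  have hBL : algebraMap (PowerSeries ℂ) LL B
      = algebraMap (PowerSeries ℂ) LL v * (algebraMap (PowerSeries ℂ) LL u)⁻¹ := by
    rw [← h, map_mul, mul_comm (algebraMap (PowerSeries ℂ) LL u), mul_assoc,
      mul_inv_cancel₀ hu0, mul_one]
  rw [hBL]
  exact hv.mul hu.inv
lemma integral_eval₂ {B : PowerSeries ℂ} (hB : IsAlgebraicPS B)
    (Q : Polynomial (Polynomial ℂ)) :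
    IsIntegral KK (algebraMap (PowerSeries ℂ) LL
      (Q.eval₂ Polynomial.coeToPowerSeries.ringHom B)) := by
  have hx : IsIntegral KK (algebraMap (PowerSeries ℂ) LL B) := isAlgebraicPS_iff_integral.mp hB
  have h1 : algebraMap (PowerSeries ℂ) LL (Q.eval₂ Polynomial.coeToPowerSeries.ringHom B)
      = Polynomial.aeval (algebraMap (PowerSeries ℂ) LL B) Q := by
    rw [Polynomial.hom_eval₂, Polynomial.aeval_def, algebraMap_PolyLL_eq]
  rw [h1, ← Polynomial.aeval_map_algebraMap KK]
  exact IsIntegral.of_mem_of_fg _ hx.fg_adjoin_singleton _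
    (Polynomial.aeval_mem_adjoin_singleton _ _)

/-- coefficient-wise derivative of a polynomial over `ℂ[z]`. -/
def coeffDeriv (P : Polynomial (Polynomial ℂ)) : Polynomial (Polynomial ℂ) :=
  P.sum fun i a => Polynomial.C (Polynomial.derivative a) * Polynomial.X ^ i

lemma coeffDeriv_monomial (i : ℕ) (a : Polynomial ℂ) :
    coeffDeriv (Polynomial.monomial i a)
      = Polynomial.C (Polynomial.derivative a) * Polynomial.X ^ i := by
  rw [coeffDeriv, Polynomial.sum_monomial_index]
  simp

lemma coeffDeriv_add (P Q : Polynomial (Polynomial ℂ)) :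
    coeffDeriv (P + Q) = coeffDeriv P + coeffDeriv Q := by
  rw [coeffDeriv, coeffDeriv, coeffDeriv, Polynomial.sum_add_index]
  · simp
  · intro i a b
    simp [add_mul]

lemma deriv_eval₂ (B : PowerSeries ℂ) (P : Polynomial (Polynomial ℂ)) :
    PowerSeries.derivative ℂ (P.eval₂ Polynomial.coeToPowerSeries.ringHom B)
      = (coeffDeriv P).eval₂ Polynomial.coeToPowerSeries.ringHom B
        + (Polynomial.derivative P).eval₂ Polynomial.coeToPowerSeries.ringHom B
          * PowerSeries.derivative ℂ B := by
  induction P using Polynomial.induction_on' with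
  | add p q hp hq =>
    rw [Polynomial.eval₂_add, map_add, hp, hq, coeffDeriv_add, Polynomial.eval₂_add, map_add,
      Polynomial.eval₂_add]
    ring
  | monomial i a =>
    rw [Polynomial.eval₂_monomial, coeffDeriv_monomial, Polynomial.derivative_monomial,
      Polynomial.eval₂_mul, Polynomial.eval₂_C, Polynomial.eval₂_X_pow,
      Polynomial.eval₂_monomial, Derivation.leibniz, Derivation.leibniz_pow, map_mul,
      map_natCast]
    simp only [Polynomial.coeToPowerSeries.ringHom_apply, PowerSeries.derivative_coe,
      smul_eq_mul, nsmul_eq_mul]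
    ring

lemma IsAlgebraicPS.derivative {B : PowerSeries ℂ} (hB : IsAlgebraicPS B) :
    IsAlgebraicPS (PowerSeries.derivative ℂ B) := by
  classical
  have hS : ∃ n, ∃ P : Polynomial (Polynomial ℂ), P ≠ 0 ∧
      P.eval₂ Polynomial.coeToPowerSeries.ringHom B = 0 ∧ P.natDegree = n := by
    obtain ⟨P, hP0, hPB⟩ := hB
    exact ⟨P.natDegree, P, hP0, hPB, rfl⟩
  obtain ⟨P, hP0, hPB, hPdeg⟩ := Nat.find_spec hS
  have hmindeg : ∀ Q : Polynomial (Polynomial ℂ), Q ≠ 0 → Q.natDegree < Nat.find hS →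
      Q.eval₂ Polynomial.coeToPowerSeries.ringHom B ≠ 0 := by
    intro Q hQ0 hQdeg hQB
    exact Nat.find_min hS hQdeg ⟨Q, hQ0, hQB, rfl⟩
  have hd0 : P.natDegree ≠ 0 := by
    intro h0
    obtain ⟨a, ha⟩ := Polynomial.natDegree_eq_zero.mp h0
    rw [← ha, Polynomial.eval₂_C] at hPB
    have : a = 0 := by
      have := (Polynomial.coe_eq_zero_iff (φ := a)).mp ?_
      · exact this
      · exact hPB
    rw [← ha, this, map_zero] at hP0
    exact hP0 rfl
  have hPd0 : Polynomial.derivative P ≠ 0 := by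
    intro h0
    exact hd0 (Polynomial.natDegree_eq_zero_of_derivative_eq_zero h0)
  have hPdlt : (Polynomial.derivative P).natDegree < Nat.find hS := by
    rw [← hPdeg]
    exact Polynomial.natDegree_derivative_lt hd0
  have hu : (Polynomial.derivative P).eval₂ Polynomial.coeToPowerSeries.ringHom B ≠ 0 :=
    hmindeg _ hPd0 hPdlt
  have hkey : (Polynomial.derivative P).eval₂ Polynomial.coeToPowerSeries.ringHom B
      * PowerSeries.derivative ℂ B
      = -(coeffDeriv P).eval₂ Polynomial.coeToPowerSeries.ringHom B := by
    have := deriv_eval₂ B P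
    rw [hPB, map_zero] at this
    linear_combination -this
  rw [isAlgebraicPS_iff_integral]
  have hu0 : algebraMap (PowerSeries ℂ) LL
      ((Polynomial.derivative P).eval₂ Polynomial.coeToPowerSeries.ringHom B) ≠ 0 :=
    fun h0 => hu (injPS (by rwa [map_zero]))
  have hBL : algebraMap (PowerSeries ℂ) LL (PowerSeries.derivative ℂ B)
      = algebraMap (PowerSeries ℂ) LL
          (-(coeffDeriv P).eval₂ Polynomial.coeToPowerSeries.ringHom B)
        * (algebraMap (PowerSeries ℂ) LL
            ((Polynomial.derivative P).eval₂ Polynomial.coeToPowerSeries.ringHom B))⁻¹ := by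
    rw [← hkey, map_mul, mul_comm (algebraMap (PowerSeries ℂ) LL _), mul_assoc,
      mul_inv_cancel₀ hu0, mul_one]
  rw [hBL, map_neg]
  exact ((integral_eval₂ hB (coeffDeriv P)).neg).mul (integral_eval₂ hB _).inv

/-- the shift of a power series: drop the constant term and divide by `z`. -/
def shiftPS (B : PowerSeries ℂ) : PowerSeries ℂ := PowerSeries.mk fun n => coeff (n + 1) B

lemma X_mul_shiftPS (B : PowerSeries ℂ) :
    PowerSeries.X * shiftPS B = B - PowerSeries.C (coeff 0 B) := by
  ext n
  cases n with
  | zero =>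
    simp [PowerSeries.coeff_zero_eq_constantCoeff, map_mul, PowerSeries.coeff_C]
  | succ n =>
    rw [PowerSeries.coeff_succ_X_mul]
    simp [shiftPS, PowerSeries.coeff_C]

lemma IsAlgebraicPS.shift {B : PowerSeries ℂ} (hB : IsAlgebraicPS B) :
    IsAlgebraicPS (shiftPS B) :=
  IsAlgebraicPS.of_mul_eq IsAlgebraicPS.X (hB.sub (IsAlgebraicPS.const _))
    PowerSeries.X_ne_zero (X_mul_shiftPS B)

lemma rescale_coe (l : ℂ) (p : Polynomial ℂ) :
    PowerSeries.rescale l (p : PowerSeries ℂ)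
      = ((Polynomial.aeval (Polynomial.C l * Polynomial.X) p : Polynomial ℂ) : PowerSeries ℂ) := by
  have h : (PowerSeries.rescale l).comp Polynomial.coeToPowerSeries.ringHom
      = Polynomial.coeToPowerSeries.ringHom.comp
          (Polynomial.aeval (Polynomial.C l * Polynomial.X)).toRingHom := by
    apply Polynomial.ringHom_ext
    · intro a
      simp only [RingHom.coe_comp, Function.comp_apply, Polynomial.coeToPowerSeries.ringHom_apply,
        Polynomial.coe_C, AlgHom.toRingHom_eq_coe, RingHom.coe_coe, Polynomial.aeval_C,
        Polynomial.algebraMap_eq]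
      ext n
      rw [PowerSeries.coeff_rescale]
      cases n with
      | zero => simp
      | succ n => simp [PowerSeries.coeff_C]
    · simp only [RingHom.coe_comp, Function.comp_apply, Polynomial.coeToPowerSeries.ringHom_apply,
        Polynomial.coe_X, AlgHom.toRingHom_eq_coe, RingHom.coe_coe, Polynomial.aeval_X]
      ext n
      rw [PowerSeries.coeff_rescale]
      rcases n with _ | _ | n <;>
        simp [PowerSeries.coeff_X, Polynomial.coe_mul, Polynomial.coe_C, Polynomial.coe_X,
          PowerSeries.coeff_C_mul]
  have := congrArg (fun f => f p) h
  simpa using this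

lemma IsAlgebraicPS.rescale {B : PowerSeries ℂ} (hB : IsAlgebraicPS B) (l : ℂ) :
    IsAlgebraicPS (PowerSeries.rescale l B) := by
  rcases eq_or_ne l 0 with rfl | hl
  · rw [PowerSeries.rescale_zero]
    exact IsAlgebraicPS.const _
  · obtain ⟨P, hP0, hPB⟩ := hB
    refine ⟨P.map (Polynomial.aeval (Polynomial.C l * Polynomial.X)).toRingHom, ?_, ?_⟩
    · rw [Ne, Polynomial.map_eq_zero_iff]
      · exact hP0
      · intro p q hpq
        simp only [AlgHom.toRingHom_eq_coe, RingHom.coe_coe] at hpq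
        have hinv : ∀ r : Polynomial ℂ,
            Polynomial.aeval (Polynomial.C l⁻¹ * Polynomial.X)
              (Polynomial.aeval (Polynomial.C l * Polynomial.X) r) = r := by
          intro r
          rw [← Polynomial.aeval_algHom_apply]
          simp only [map_mul, Polynomial.aeval_C, Polynomial.aeval_X, Polynomial.algebraMap_eq]
          rw [← mul_assoc, ← map_mul, mul_inv_cancel₀ hl, map_one, one_mul]
          exact Polynomial.aeval_X_left_apply r
        have := congrArg (Polynomial.aeval (Polynomial.C l⁻¹ * Polynomial.X)) hpq
        rwa [hinv, hinv] at this
    · rw [Polynomial.eval₂_map]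
      have hcomp : Polynomial.coeToPowerSeries.ringHom.comp
            (Polynomial.aeval (Polynomial.C l * Polynomial.X)).toRingHom
          = (PowerSeries.rescale l).comp Polynomial.coeToPowerSeries.ringHom := by
        apply RingHom.ext
        intro p
        exact (rescale_coe l p).symm
      rw [hcomp, ← Polynomial.hom_eval₂, hPB, map_zero]


lemma coeff_hadamardMul (A B : PowerSeries ℂ) (n : ℕ) :
    coeff n (hadamardMul A B) = coeff n A * coeff n B := by
  rw [hadamardMul, PowerSeries.coeff_mk]

/-- the Hadamard-multiplier property: `v ⊙ C` is algebraic for every algebraic `C`. -/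
def MemT (v : PowerSeries ℂ) : Prop :=
  ∀ C : PowerSeries ℂ, IsAlgebraicPS C → IsAlgebraicPS (hadamardMul v C)

lemma hadamard_add_left (A A' B : PowerSeries ℂ) :
    hadamardMul (A + A') B = hadamardMul A B + hadamardMul A' B := by
  ext n; simp [coeff_hadamardMul, add_mul]

lemma hadamard_Cmul_left (c : ℂ) (A B : PowerSeries ℂ) :
    hadamardMul (PowerSeries.C c * A) B = PowerSeries.C c * hadamardMul A B := by
  ext n; simp [coeff_hadamardMul, PowerSeries.coeff_C_mul, mul_assoc]

lemma hadamard_Xmul_left (A B : PowerSeries ℂ) :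
    hadamardMul (PowerSeries.X * A) B = PowerSeries.X * hadamardMul A (shiftPS B) := by
  ext n
  cases n with
  | zero =>
    simp [coeff_hadamardMul, PowerSeries.coeff_zero_eq_constantCoeff, map_mul]
  | succ n =>
    rw [coeff_hadamardMul, PowerSeries.coeff_succ_X_mul, PowerSeries.coeff_succ_X_mul,
      coeff_hadamardMul]
    simp [shiftPS]

lemma hadamard_C_left (c : ℂ) (B : PowerSeries ℂ) :
    hadamardMul (PowerSeries.C c) B = PowerSeries.C (c * coeff 0 B) := by
  ext n
  cases n with
  | zero => simp [coeff_hadamardMul, PowerSeries.coeff_C]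
  | succ n => simp [coeff_hadamardMul, PowerSeries.coeff_C]

lemma hadamard_deriv_left (u C : PowerSeries ℂ) :
    hadamardMul (PowerSeries.derivative ℂ u) C
      = PowerSeries.derivative ℂ (hadamardMul u (PowerSeries.X * C)) := by
  ext n
  rw [coeff_hadamardMul, PowerSeries.coeff_derivative, PowerSeries.coeff_derivative,
    coeff_hadamardMul, PowerSeries.coeff_succ_X_mul]
  ring

lemma MemT.Cmul {v : PowerSeries ℂ} (hv : MemT v) (c : ℂ) : MemT (PowerSeries.C c * v) := by
  intro C hC
  rw [hadamard_Cmul_left]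
  exact (IsAlgebraicPS.const c).mul (hv C hC)

lemma MemT.add {v w : PowerSeries ℂ} (hv : MemT v) (hw : MemT w) : MemT (v + w) := by
  intro C hC
  rw [hadamard_add_left]
  exact (hv C hC).add (hw C hC)

lemma MemT.Xmul {v : PowerSeries ℂ} (hv : MemT v) : MemT (PowerSeries.X * v) := by
  intro C hC
  rw [hadamard_Xmul_left]
  exact IsAlgebraicPS.X.mul (hv _ hC.shift)

lemma monomial_eq_C_mul_X_pow (i : ℕ) (a : ℂ) :
    (PowerSeries.monomial i) a = PowerSeries.C a * PowerSeries.X ^ i := by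
  ext n
  rw [PowerSeries.coeff_monomial, PowerSeries.coeff_C_mul_X_pow]

lemma MemT.polyMul {v : PowerSeries ℂ} (hv : MemT v) (p : Polynomial ℂ) :
    MemT ((p : PowerSeries ℂ) * v) := by
  induction p using Polynomial.induction_on' with
  | add q r hq hr =>
    rw [Polynomial.coe_add, add_mul]
    exact hq.add hr
  | monomial i a =>
    rw [Polynomial.coe_monomial, monomial_eq_C_mul_X_pow]
    induction i with
    | zero =>
      rw [pow_zero, mul_one]
      exact hv.Cmul a
    | succ i ih =>
      have h : PowerSeries.C a * PowerSeries.X ^ (i + 1) * v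
          = PowerSeries.X * (PowerSeries.C a * PowerSeries.X ^ i * v) := by ring
      rw [h]
      exact ih.Xmul

lemma MemT.derivative {v : PowerSeries ℂ} (hv : MemT v) :
    MemT (PowerSeries.derivative ℂ v) := by
  intro C hC
  rw [hadamard_deriv_left]
  exact (hv _ (IsAlgebraicPS.X.mul hC)).derivative


/-- base case: the Hadamard action of the inverse of `X - mu`. -/
lemma memT_inv_linear {μ : ℂ} (hμ : μ ≠ 0) {u : PowerSeries ℂ}
    (hu : ((Polynomial.X - Polynomial.C μ : Polynomial ℂ) : PowerSeries ℂ) * u = 1) :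
    MemT u := by
  rw [Polynomial.coe_sub, Polynomial.coe_X, Polynomial.coe_C] at hu
  have hc0 : coeff 0 u = -μ⁻¹ := by
    have h := congrArg (PowerSeries.constantCoeff) hu
    rw [map_mul, map_one, map_sub, PowerSeries.constantCoeff_X,
      PowerSeries.constantCoeff_C, zero_sub] at h
    rw [PowerSeries.coeff_zero_eq_constantCoeff_apply]
    apply mul_left_cancel₀ (neg_ne_zero.mpr hμ)
    rw [h, show (-μ : ℂ) * -μ⁻¹ = μ * μ⁻¹ by ring, mul_inv_cancel₀ hμ]
  have hrec : ∀ n, coeff (n + 1) u = μ⁻¹ * coeff n u := by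
    intro n
    have h := congrArg (coeff (n + 1)) hu
    rw [PowerSeries.coeff_one, if_neg (Nat.succ_ne_zero n), sub_mul, map_sub,
      PowerSeries.coeff_succ_X_mul, PowerSeries.coeff_C_mul] at h
    apply mul_left_cancel₀ hμ
    rw [← mul_assoc, mul_inv_cancel₀ hμ, one_mul]
    linear_combination -h
  have hcoeff : ∀ n, coeff n u = -μ⁻¹ * (μ⁻¹) ^ n := by
    intro n
    induction n with
    | zero => rw [pow_zero, mul_one]; exact hc0
    | succ n ih => rw [hrec n, ih, pow_succ]; ring
  intro C hC
  have hform : hadamardMul u C = PowerSeries.C (-μ⁻¹) * PowerSeries.rescale μ⁻¹ C := by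
    ext n
    rw [coeff_hadamardMul, PowerSeries.coeff_C_mul, PowerSeries.coeff_rescale, hcoeff n]
    ring
  rw [hform]
  exact (IsAlgebraicPS.const _).mul (hC.rescale μ⁻¹)

/-- powers: the Hadamard action of the inverse of `(X - mu)^k`. -/
lemma memT_inv_linear_pow {μ : ℂ} (hμ : μ ≠ 0) :
    ∀ k : ℕ, 1 ≤ k → ∀ u : PowerSeries ℂ,
      ((((Polynomial.X - Polynomial.C μ) ^ k : Polynomial ℂ) : PowerSeries ℂ) * u = 1) →
      MemT u := by
  intro k
  induction k with
  | zero => omega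
  | succ k ih =>
    intro _ u hu
    rcases Nat.eq_zero_or_pos k with rfl | hk
    · rw [pow_one] at hu
      exact memT_inv_linear hμ hu
    · set F : PowerSeries ℂ := ((Polynomial.X - Polynomial.C μ : Polynomial ℂ) : PowerSeries ℂ)
        with hF
      have hFpow : ∀ m : ℕ, ((((Polynomial.X - Polynomial.C μ) ^ m : Polynomial ℂ))
          : PowerSeries ℂ) = F ^ m := by
        intro m
        rw [Polynomial.coe_pow]
      rw [hFpow] at hu
      set u' : PowerSeries ℂ := F * u with hu'
      have h1 : F ^ k * u' = 1 := by
        rw [hu', ← mul_assoc, ← pow_succ, hu]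
      have hdF : PowerSeries.derivative ℂ F = 1 := by
        rw [hF, Polynomial.coe_sub, Polynomial.coe_X, Polynomial.coe_C, map_sub,
          PowerSeries.derivative_X, PowerSeries.derivative_C, sub_zero]
      have hk0 : (k : ℂ) ≠ 0 := Nat.cast_ne_zero.mpr (by omega)
      have h2 : F ^ k * PowerSeries.derivative ℂ u'
          + u' * ((k : PowerSeries ℂ) * F ^ (k - 1)) = 0 := by
        have h2a : PowerSeries.derivative ℂ (F ^ k * u') = 0 := by
          rw [h1]
          exact Derivation.map_one_eq_zero _
        rw [Derivation.leibniz, Derivation.leibniz_pow, hdF] at h2a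
        simp only [smul_eq_mul, nsmul_eq_mul, mul_one] at h2a
        linear_combination h2a
      have hFk : F * F ^ (k - 1) = F ^ k := by
        rw [← pow_succ']
        congr 1
        omega
      have hCk : PowerSeries.C (-(k : ℂ)) = -((k : ℕ) : PowerSeries ℂ) := by
        rw [map_neg, map_natCast]
      have h3 : F ^ (k + 1) * PowerSeries.derivative ℂ u' = PowerSeries.C (-(k : ℂ)) := by
        rw [hCk]
        linear_combination F * h2 + (-((k : ℕ) : PowerSeries ℂ) * u') * hFk
          + (-((k : ℕ) : PowerSeries ℂ)) * h1
      have hCku : PowerSeries.C (-(k : ℂ)) * u = PowerSeries.derivative ℂ u' := by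
        rw [← h3]
        calc F ^ (k + 1) * PowerSeries.derivative ℂ u' * u
            = (F ^ (k + 1) * u) * PowerSeries.derivative ℂ u' := by ring
          _ = PowerSeries.derivative ℂ u' := by rw [hu, one_mul]
      have hrepr : u = PowerSeries.C (-(k : ℂ))⁻¹ * PowerSeries.derivative ℂ u' := by
        rw [← hCku, ← mul_assoc, ← map_mul, inv_mul_cancel₀ (neg_ne_zero.mpr hk0), map_one,
          one_mul]
      have hT' : MemT u' := by
        apply ih hk u'
        rw [hFpow]
        exact h1
      rw [hrepr]
      exact hT'.derivative.Cmul _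

lemma memT_inv_const {Q : Polynomial ℂ} (hQ : Q.natDegree = 0) (h0 : Q.coeff 0 ≠ 0)
    {u : PowerSeries ℂ} (hu : (Q : PowerSeries ℂ) * u = 1) : MemT u := by
  obtain ⟨c, hc⟩ := Polynomial.natDegree_eq_zero.mp hQ
  have hc0 : c ≠ 0 := by
    intro h
    apply h0
    rw [← hc, h]
    simp
  rw [← hc, Polynomial.coe_C] at hu
  have hform : u = PowerSeries.C c⁻¹ := by
    calc u = PowerSeries.C c⁻¹ * (PowerSeries.C c * u) := by
          rw [← mul_assoc, ← map_mul, inv_mul_cancel₀ hc0, map_one, one_mul]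
      _ = PowerSeries.C c⁻¹ := by rw [hu, mul_one]
  rw [hform]
  intro C hC
  rw [hadamard_C_left]
  exact IsAlgebraicPS.const _

lemma memT_inv_poly : ∀ N : ℕ, ∀ Q : Polynomial ℂ, Q.natDegree ≤ N → Q.coeff 0 ≠ 0 →
    ∀ u : PowerSeries ℂ, (Q : PowerSeries ℂ) * u = 1 → MemT u := by
  intro N
  induction N with
  | zero =>
    intro Q hdeg h0 u hu
    exact memT_inv_const (Nat.le_zero.mp hdeg) h0 hu
  | succ N ih =>
    intro Q hdeg h0 u hu
    rcases Nat.eq_zero_or_pos Q.natDegree with hQ0 | hQpos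
    · exact memT_inv_const hQ0 h0 hu
    · have hQne : Q ≠ 0 := fun h => h0 (by simp [h])
      have hdegpos : 0 < Q.degree := Polynomial.natDegree_pos_iff_degree_pos.mp hQpos
      obtain ⟨μ, hμroot⟩ := Complex.exists_root hdegpos
      have hμ0 : μ ≠ 0 := by
        intro h
        apply h0
        rw [Polynomial.coeff_zero_eq_eval_zero]
        rw [h] at hμroot
        exact hμroot
      obtain ⟨Q₁, hfac, hndvd⟩ := Q.exists_eq_pow_rootMultiplicity_mul_and_not_dvd hQne μ
      set k := Q.rootMultiplicity μ with hkdef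
      have hk : 1 ≤ k := (Polynomial.rootMultiplicity_pos hQne).mpr hμroot
      have hQ₁0 : Q₁.coeff 0 ≠ 0 := by
        intro h
        apply h0
        rw [Polynomial.coeff_zero_eq_eval_zero] at h ⊢
        rw [hfac, Polynomial.eval_mul, h, mul_zero]
      have hQ₁ne : Q₁ ≠ 0 := fun h => hQ₁0 (by simp [h])
      have hdeg₁ : Q₁.natDegree ≤ N := by
        have hdd : Q.natDegree = k + Q₁.natDegree := by
          rw [hfac, Polynomial.natDegree_mul (pow_ne_zero _ (Polynomial.X_sub_C_ne_zero μ))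
            hQ₁ne, Polynomial.natDegree_pow, Polynomial.natDegree_X_sub_C, mul_one]
        omega
      have hcop : IsCoprime ((Polynomial.X - Polynomial.C μ) ^ k) Q₁ :=
        ((Polynomial.irreducible_X_sub_C μ).coprime_iff_not_dvd.mpr hndvd).pow_left
      obtain ⟨a, b, hab⟩ := hcop
      set u₁ : PowerSeries ℂ :=
        (((Polynomial.X - Polynomial.C μ) ^ k : Polynomial ℂ) : PowerSeries ℂ) * u with hu₁
      set u₂ : PowerSeries ℂ := (Q₁ : PowerSeries ℂ) * u with hu₂
      have h₁ : (Q₁ : PowerSeries ℂ) * u₁ = 1 := by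
        rw [hu₁]
        calc (Q₁ : PowerSeries ℂ)
              * ((((Polynomial.X - Polynomial.C μ) ^ k : Polynomial ℂ) : PowerSeries ℂ) * u)
            = ((((Polynomial.X - Polynomial.C μ) ^ k : Polynomial ℂ) : PowerSeries ℂ)
                * (Q₁ : PowerSeries ℂ)) * u := by ring
          _ = (Q : PowerSeries ℂ) * u := by rw [← Polynomial.coe_mul, ← hfac]
          _ = 1 := hu
      have h₂ : (((Polynomial.X - Polynomial.C μ) ^ k : Polynomial ℂ) : PowerSeries ℂ)
          * u₂ = 1 := by
        rw [hu₂]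
        calc (((Polynomial.X - Polynomial.C μ) ^ k : Polynomial ℂ) : PowerSeries ℂ)
              * ((Q₁ : PowerSeries ℂ) * u)
            = ((((Polynomial.X - Polynomial.C μ) ^ k : Polynomial ℂ) : PowerSeries ℂ)
                * (Q₁ : PowerSeries ℂ)) * u := by ring
          _ = (Q : PowerSeries ℂ) * u := by rw [← Polynomial.coe_mul, ← hfac]
          _ = 1 := hu
      have hT₁ : MemT u₁ := ih Q₁ hdeg₁ hQ₁0 u₁ h₁
      have hT₂ : MemT u₂ := memT_inv_linear_pow hμ0 k hk u₂ h₂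
      have hurepr : u = (a : PowerSeries ℂ) * u₁ + (b : PowerSeries ℂ) * u₂ := by
        rw [hu₁, hu₂]
        calc u = ((1 : Polynomial ℂ) : PowerSeries ℂ) * u := by rw [Polynomial.coe_one, one_mul]
          _ = ((a * (Polynomial.X - Polynomial.C μ) ^ k + b * Q₁ : Polynomial ℂ)
                : PowerSeries ℂ) * u := by rw [hab]
          _ = (a : PowerSeries ℂ)
                * ((((Polynomial.X - Polynomial.C μ) ^ k : Polynomial ℂ) : PowerSeries ℂ) * u)
              + (b : PowerSeries ℂ) * ((Q₁ : PowerSeries ℂ) * u) := by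
              rw [Polynomial.coe_add, Polynomial.coe_mul, Polynomial.coe_mul]
              ring
      rw [hurepr]
      exact (hT₁.polyMul a).add (hT₂.polyMul b)

/-- Jungen's theorem: the Hadamard product of a rational power series with an
algebraic power series is algebraic. -/
lemma memT_of_rational {R : PowerSeries ℂ} (hR : IsRationalPS R) : MemT R := by
  obtain ⟨P, Q, hQ0, hQR⟩ := hR
  have hunit : IsUnit (Q : PowerSeries ℂ) := by
    rw [PowerSeries.isUnit_iff_constantCoeff, Polynomial.constantCoeff_coe]
    exact isUnit_iff_ne_zero.mpr hQ0
  obtain ⟨U, hU⟩ := hunit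
  have huQ : (Q : PowerSeries ℂ) * (↑U⁻¹ : PowerSeries ℂ) = 1 := by
    rw [← hU]
    exact U.mul_inv
  have hRrepr : R = (P : PowerSeries ℂ) * (↑U⁻¹ : PowerSeries ℂ) := by
    calc R = ((Q : PowerSeries ℂ) * (↑U⁻¹ : PowerSeries ℂ)) * R := by rw [huQ, one_mul]
      _ = (↑U⁻¹ : PowerSeries ℂ) * ((Q : PowerSeries ℂ) * R) := by ring
      _ = (↑U⁻¹ : PowerSeries ℂ) * (P : PowerSeries ℂ) := by rw [hQR]
      _ = (P : PowerSeries ℂ) * (↑U⁻¹ : PowerSeries ℂ) := by ring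
  rw [hRrepr]
  exact (memT_inv_poly Q.natDegree Q le_rfl hQ0 _ huQ).polyMul P

end JungenAux

/-- If `A ∈ ℂ⟦z⟧` is not rational and has Hadamard grade exactly `d`, then in every
Hadamard decomposition of `A` into `d` algebraic power series, every factor is
not rational. -/
theorem not_rational_factors_of_minimal_hadamard_decomposition (A : PowerSeries ℂ)
    (hirr : ¬ IsRationalPS A) (d : ℕ) (hd : HadamardGradeLe A d)
    (hmin : ∀ e : ℕ, e < d → ¬ HadamardGradeLe A e)
    (B : Fin d → PowerSeries ℂ) (halg : ∀ i, IsAlgebraicPS (B i))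
    (hdec : ∀ n, PowerSeries.coeff n A = ∏ i, PowerSeries.coeff n (B i)) :
    ∀ i, ¬ IsRationalPS (B i) := by
  intro i hi
  cases d with
  | zero => exact i.elim0
  | succ d' =>
    cases d' with
    | zero =>
      apply hirr
      have hA : A = B i := by
        have hieq : (0 : Fin 1) = i := Subsingleton.elim _ _
        ext n
        rw [hdec n, Fin.prod_univ_one, hieq]
      rw [hA]
      exact hi
    | succ e =>
      apply hmin (e + 1) (by omega)
      refine ⟨Fin.cons (hadamardMul (B i) (B (i.succAbove 0)))
        (fun t : Fin e => B (i.succAbove t.succ)), ?_, ?_⟩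
      · intro t
        refine Fin.cases ?_ ?_ t
        · rw [Fin.cons_zero]
          exact memT_of_rational hi (B _) (halg _)
        · intro t'
          rw [Fin.cons_succ]
          exact halg _
      · intro n
        rw [hdec n, Fin.prod_univ_succAbove (fun j => PowerSeries.coeff n (B j)) i]
        simp only [Fin.prod_univ_succ, Fin.cons_zero, Fin.cons_succ, coeff_hadamardMul]
        ring
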